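/- arXiv:2308.08023 — 3 statements merged into one kernel-verified Lean document; each statement's English description precedes it below -/
import Mathlib

section
/- Let R ∈ SO(3) and let M ∈ ℝ^{3×3} be symmetric positive semidefinite. Define M̄ = Tr(M)·I₃ − M and let λ̄ denote the largest eigenvalue of M̄. Then ‖vex(P_a(M R))‖² ≤ 2 λ̄ ‖M R‖_I. -/
open Matrix

/-- `vex(𝒫ₐ(A))`: the vector associated to the skew-symmetric projection
`𝒫ₐ(A) = ½(A − Aᵀ)`, viewed in Euclidean 3-space. -/
noncomputable def vexPa (A : Matrix (Fin 3) (Fin 3) ℝ) : EuclideanSpace ℝ (Fin 3) :=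
  (WithLp.equiv 2 (Fin 3 → ℝ)).symm
    ![(A 2 1 - A 1 2) / 2, (A 0 2 - A 2 0) / 2, (A 1 0 - A 0 1) / 2]

/-- `‖M R‖_I = ¼ Tr(M (I₃ − R))`. -/
noncomputable def normI (M R : Matrix (Fin 3) (Fin 3) ℝ) : ℝ :=
  (M * (1 - R)).trace / 4


lemma spectral_ineq {n : ℕ} {N : Matrix (Fin n) (Fin n) ℝ} (hN : N.PosSemidef)
    {lam : ℝ} (hlam : ∀ i, hN.1.eigenvalues i ≤ lam) (x : Fin n → ℝ) :
    (N.mulVec x) ⬝ᵥ (N.mulVec x) ≤ lam * (x ⬝ᵥ N.mulVec x) := by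
  classical
  set U : Matrix (Fin n) (Fin n) ℝ := (hN.1.eigenvectorUnitary : Matrix (Fin n) (Fin n) ℝ)
  have hU : star U * U = 1 := (Matrix.mem_unitaryGroup_iff').mp hN.1.eigenvectorUnitary.2
  have hspec := hN.1.spectral_theorem
  have hK : lam • N - N * N =
      U * diagonal (fun i => lam * hN.1.eigenvalues i - hN.1.eigenvalues i * hN.1.eigenvalues i)
        * star U := by
    have hd : (diagonal (RCLike.ofReal ∘ hN.1.eigenvalues) : Matrix (Fin n) (Fin n) ℝ) =
        diagonal hN.1.eigenvalues := by
      simp [Function.comp, RCLike.ofReal]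
    conv_lhs => rw [hspec, Unitary.conjStarAlgAut_apply, hd]
    have : (U * diagonal hN.1.eigenvalues * star U) * (U * diagonal hN.1.eigenvalues * star U)
        = U * (diagonal hN.1.eigenvalues * diagonal hN.1.eigenvalues) * star U := by
      rw [mul_assoc (U * diagonal hN.1.eigenvalues)]
      rw [show star U * (U * diagonal hN.1.eigenvalues * star U)
          = (star U * U) * (diagonal hN.1.eigenvalues * star U) by noncomm_ring]
      rw [hU, one_mul]
      noncomm_ring
    rw [this, diagonal_mul_diagonal]
    rw [show lam • (U * diagonal hN.1.eigenvalues * star U)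
       = U * (lam • diagonal hN.1.eigenvalues) * star U by
        simp [Matrix.smul_mul, Matrix.mul_smul]]
    rw [← Matrix.sub_mul, ← Matrix.mul_sub]
    congr 2
    rw [← Matrix.diagonal_smul, diagonal_sub]
    congr 1
  have hKpsd : (lam • N - N * N).PosSemidef := by
    rw [hK]
    refine PosSemidef.mul_mul_conjTranspose_same ?_ U
    refine posSemidef_diagonal_iff.mpr fun i => ?_
    have h0 := hN.eigenvalues_nonneg i
    nlinarith [hlam i]
  have h := hKpsd.dotProduct_mulVec_nonneg x
  simp only [star_trivial] at h
  rw [sub_mulVec, dotProduct_sub, smul_mulVec, dotProduct_smul] at h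
  have hsym : x ⬝ᵥ (N * N).mulVec x = (N.mulVec x) ⬝ᵥ (N.mulVec x) := by
    rw [← mulVec_mulVec, dotProduct_mulVec x N, ← mulVec_transpose]
    congr 1
    rw [show Nᵀ = N from hN.1]
  rw [hsym] at h
  simp only [smul_eq_mul] at h
  linarith

lemma mbar_quadform_nonneg (M : Matrix (Fin 3) (Fin 3) ℝ) (hM : M.PosSemidef)
    (x : Fin 3 → ℝ) :
    0 ≤ x ⬝ᵥ (M.trace • (1 : Matrix (Fin 3) (Fin 3) ℝ) - M).mulVec x := by
  obtain ⟨B, hB⟩ : ∃ B : Matrix (Fin 3) (Fin 3) ℝ, M = Bᴴ * B := by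
    open scoped MatrixOrder Matrix.Norms.L2Operator in
    exact CStarAlgebra.nonneg_iff_eq_star_mul_self.mp hM.nonneg
  subst hB
  simp only [dotProduct, mulVec, Matrix.sub_apply, Matrix.smul_apply, Matrix.one_apply,
    Matrix.trace, Matrix.diag, Matrix.mul_apply, Matrix.conjTranspose_apply, star_trivial,
    Fin.sum_univ_three, smul_eq_mul]
  simp only [Fin.isValue, show ((0:Fin 3) = 1) = False by simp, show ((0:Fin 3) = 2) = False by simp,
    show ((1:Fin 3) = 0) = False by simp, show ((1:Fin 3) = 2) = False by simp,
    show ((2:Fin 3) = 0) = False by simp, show ((2:Fin 3) = 1) = False by simp,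
    if_true, if_false, mul_one, mul_zero]
  nlinarith [sq_nonneg (B 0 0 * x 1 - B 0 1 * x 0), sq_nonneg (B 0 0 * x 2 - B 0 2 * x 0),
    sq_nonneg (B 0 1 * x 2 - B 0 2 * x 1), sq_nonneg (B 1 0 * x 1 - B 1 1 * x 0),
    sq_nonneg (B 1 0 * x 2 - B 1 2 * x 0), sq_nonneg (B 1 1 * x 2 - B 1 2 * x 1),
    sq_nonneg (B 2 0 * x 1 - B 2 1 * x 0), sq_nonneg (B 2 0 * x 2 - B 2 2 * x 0),
    sq_nonneg (B 2 1 * x 2 - B 2 2 * x 1)]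

set_option maxHeartbeats 3200000 in
/-- for `R ∈ SO(3)` and `M` symmetric positive semidefinite, with
`M̄ = Tr(M)·I₃ − M` and `λ̄` its largest eigenvalue,
`‖vex(𝒫ₐ(M R))‖² ≤ 2 λ̄ ‖M R‖_I`. -/
theorem vexPa_sq_le (R M : Matrix (Fin 3) (Fin 3) ℝ)
    (hR : Rᵀ * R = 1) (hRdet : R.det = 1)
    (hM : M.PosSemidef)
    (Mbar : Matrix (Fin 3) (Fin 3) ℝ)
    (hMbar : Mbar = M.trace • (1 : Matrix (Fin 3) (Fin 3) ℝ) - M)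
    (hHerm : Mbar.IsHermitian)
    (lam : ℝ) (hlam : lam = ⨆ i, hHerm.eigenvalues i) :
    ‖vexPa (M * R)‖ ^ 2 ≤ 2 * lam * normI M R := by
  have hRRT : R * Rᵀ = 1 := mul_eq_one_comm.mp hR
  -- determinant of R - 1 is zero
  have hdet0 : (R - 1).det = 0 := by
    have e1 : Rᵀ * (R - 1) = 1 - Rᵀ := by rw [Matrix.mul_sub, hR, Matrix.mul_one]
    have e2 : (R - 1).det = (1 - Rᵀ).det := by
      rw [← e1, Matrix.det_mul, Matrix.det_transpose, hRdet, one_mul]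
    have e3 : ((1 : Matrix (Fin 3) (Fin 3) ℝ) - Rᵀ).det = (1 - R).det := by
      rw [show (1 : Matrix (Fin 3) (Fin 3) ℝ) - Rᵀ = (1 - R)ᵀ by
        rw [Matrix.transpose_sub, Matrix.transpose_one], Matrix.det_transpose]
    have e4 : ((1 : Matrix (Fin 3) (Fin 3) ℝ) - R).det = -(R - 1).det := by
      rw [show (1 : Matrix (Fin 3) (Fin 3) ℝ) - R = -(R - 1) by rw [neg_sub], Matrix.det_neg]
      norm_num
    linarith [e2, e3, e4]
  -- axis
  obtain ⟨b, hbne, hb⟩ := Matrix.exists_mulVec_eq_zero_iff.mpr hdet0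
  -- adjugate
  have hadj : R.adjugate = Rᵀ := by
    calc R.adjugate = R.adjugate * (R * Rᵀ) := by rw [hRRT, Matrix.mul_one]
    _ = (R.adjugate * R) * Rᵀ := by rw [Matrix.mul_assoc]
    _ = Rᵀ := by rw [Matrix.adjugate_mul, hRdet, one_smul, Matrix.one_mul]
  -- normalized axis
  have hbb : 0 < b 0 ^ 2 + b 1 ^ 2 + b 2 ^ 2 := by
    have hi' : b 0 ≠ 0 ∨ b 1 ≠ 0 ∨ b 2 ≠ 0 := by
      by_contra h
      push_neg at h
      apply hbne
      funext j
      fin_cases j <;> simp [h.1, h.2.1, h.2.2]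
    rcases hi' with hi | hi | hi <;>
      nlinarith [mul_self_pos.mpr hi, sq_nonneg (b 0), sq_nonneg (b 1), sq_nonneg (b 2)]
  set r : ℝ := Real.sqrt (b 0 ^ 2 + b 1 ^ 2 + b 2 ^ 2) with hrdef
  have hr : 0 < r := Real.sqrt_pos.mpr hbb
  have hr2 : r ^ 2 = b 0 ^ 2 + b 1 ^ 2 + b 2 ^ 2 := Real.sq_sqrt hbb.le
  have hrne : r ≠ 0 := ne_of_gt hr
  obtain ⟨a0, ha0def⟩ : ∃ x : ℝ, x = b 0 / r := ⟨_, rfl⟩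
  obtain ⟨a1, ha1def⟩ : ∃ x : ℝ, x = b 1 / r := ⟨_, rfl⟩
  obtain ⟨a2, ha2def⟩ : ∃ x : ℝ, x = b 2 / r := ⟨_, rfl⟩
  have hunit : a0 ^ 2 + a1 ^ 2 + a2 ^ 2 = 1 := by
    rw [ha0def, ha1def, ha2def]
    field_simp
    linarith [hr2]
  -- R a = a componentwise
  have hb0 := congrFun hb 0
  have hb1 := congrFun hb 1
  have hb2 := congrFun hb 2
  simp only [Matrix.mulVec, dotProduct, Fin.sum_univ_three, Matrix.sub_apply,
    Matrix.one_apply, Pi.zero_apply] at hb0 hb1 hb2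
  norm_num [Fin.ext_iff] at hb0 hb1 hb2
  have ra0 : R 0 0 * a0 + R 0 1 * a1 + R 0 2 * a2 = a0 := by
    rw [ha0def, ha1def, ha2def]; field_simp; linear_combination hb0
  have ra1 : R 1 0 * a0 + R 1 1 * a1 + R 1 2 * a2 = a1 := by
    rw [ha0def, ha1def, ha2def]; field_simp; linear_combination hb1
  have ra2 : R 2 0 * a0 + R 2 1 * a1 + R 2 2 * a2 = a2 := by
    rw [ha0def, ha1def, ha2def]; field_simp; linear_combination hb2
  -- column orthonormality
  have ho : ∀ i j, R 0 i * R 0 j + R 1 i * R 1 j + R 2 i * R 2 j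
      = if i = j then (1 : ℝ) else 0 := by
    intro i j
    have := congrFun (congrFun hR i) j
    simpa [Matrix.mul_apply, Fin.sum_univ_three, Matrix.one_apply, Matrix.transpose_apply]
      using this
  have o00 := ho 0 0; have o11 := ho 1 1; have o22 := ho 2 2
  have o01 := ho 0 1; have o02 := ho 0 2; have o12 := ho 1 2
  have o10 := ho 1 0; have o20 := ho 2 0; have o21 := ho 2 1
  norm_num [Fin.ext_iff] at o00 o11 o22 o01 o02 o12 o10 o20 o21
  -- Rᵀ a = a componentwise
  have rta0 : R 0 0 * a0 + R 1 0 * a1 + R 2 0 * a2 = a0 := by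
    linear_combination a0 * o00 + a1 * o01 + a2 * o02 - R 0 0 * ra0 - R 1 0 * ra1 - R 2 0 * ra2
  have rta1 : R 0 1 * a0 + R 1 1 * a1 + R 2 1 * a2 = a1 := by
    linear_combination a0 * o10 + a1 * o11 + a2 * o12 - R 0 1 * ra0 - R 1 1 * ra1 - R 2 1 * ra2
  have rta2 : R 0 2 * a0 + R 1 2 * a1 + R 2 2 * a2 = a2 := by
    linear_combination a0 * o20 + a1 * o21 + a2 * o22 - R 0 2 * ra0 - R 1 2 * ra1 - R 2 2 * ra2
  -- adjugate diagonal entries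
  rw [Matrix.adjugate_fin_three] at hadj
  have e00 := congrFun (congrFun hadj 0) 0
  have e11 := congrFun (congrFun hadj 1) 1
  have e22 := congrFun (congrFun hadj 2) 2
  simp [Matrix.transpose_apply] at e00 e11 e22
  -- rotation parameters
  obtain ⟨c, hcdef⟩ : ∃ x : ℝ, x = (R 0 0 + R 1 1 + R 2 2 - 1) / 2 := ⟨_, rfl⟩
  obtain ⟨w0, hw0def⟩ : ∃ x : ℝ, x = (R 2 1 - R 1 2) / 2 := ⟨_, rfl⟩
  obtain ⟨w1, hw1def⟩ : ∃ x : ℝ, x = (R 0 2 - R 2 0) / 2 := ⟨_, rfl⟩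
  obtain ⟨w2, hw2def⟩ : ∃ x : ℝ, x = (R 1 0 - R 0 1) / 2 := ⟨_, rfl⟩
  obtain ⟨s, hsdef⟩ : ∃ x : ℝ, x = a0 * w0 + a1 * w1 + a2 * w2 := ⟨_, rfl⟩
  -- w is parallel to a
  have cz0 : w1 * a2 - w2 * a1 = 0 := by
    linear_combination (1/2) * ra0 - (1/2) * rta0 + a2 * hw1def - a1 * hw2def
  have cz1 : w2 * a0 - w0 * a2 = 0 := by
    linear_combination (1/2) * ra1 - (1/2) * rta1 + a0 * hw2def - a2 * hw0def
  have cz2 : w0 * a1 - w1 * a0 = 0 := by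
    linear_combination (1/2) * ra2 - (1/2) * rta2 + a1 * hw0def - a0 * hw1def
  have hw0 : w0 = s * a0 := by
    linear_combination - w0 * hunit + a1 * cz2 - a2 * cz1 - a0 * hsdef
  have hw1 : w1 = s * a1 := by
    linear_combination - w1 * hunit - a0 * cz2 + a2 * cz0 - a1 * hsdef
  have hw2 : w2 = s * a2 := by
    linear_combination - w2 * hunit + a0 * cz1 - a1 * cz0 - a2 * hsdef
  -- c² + s² = 1
  have hwn : w0 ^ 2 + w1 ^ 2 + w2 ^ 2 = s ^ 2 := by
    linear_combination (w0 + s * a0) * hw0 + (w1 + s * a1) * hw1 + (w2 + s * a2) * hw2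
      + s ^ 2 * hunit
  have htr : ((R 0 0 + R 1 1 + R 2 2 - 1) / 2) ^ 2 + ((R 2 1 - R 1 2) / 2) ^ 2
      + ((R 0 2 - R 2 0) / 2) ^ 2 + ((R 1 0 - R 0 1) / 2) ^ 2 = 1 := by
    linear_combination (1/2) * (e00 + e11 + e22) + (1/4) * (o00 + o11 + o22)
  have hcs : c ^ 2 + s ^ 2 = 1 := by
    linear_combination htr + (c + (R 0 0 + R 1 1 + R 2 2 - 1) / 2) * hcdef - hwn
      + (w0 + (R 2 1 - R 1 2) / 2) * hw0def + (w1 + (R 0 2 - R 2 0) / 2) * hw1def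
      + (w2 + (R 1 0 - R 0 1) / 2) * hw2def
  -- structure theorem
  have hT : R 0 0 + R 1 1 + R 2 2 = 2 * c + 1 := by linear_combination -2 * hcdef
  have hA : R 0 0 * a0 * a0 + R 0 1 * a0 * a1 + R 0 2 * a0 * a2
      + R 1 0 * a1 * a0 + R 1 1 * a1 * a1 + R 1 2 * a1 * a2
      + R 2 0 * a2 * a0 + R 2 1 * a2 * a1 + R 2 2 * a2 * a2 = 1 := by
    linear_combination a0 * ra0 + a1 * ra1 + a2 * ra2 + hunit
  have hW : a0 * (R 2 1 - R 1 2) + a1 * (R 0 2 - R 2 0) + a2 * (R 1 0 - R 0 1) = 2 * s := by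
    linear_combination -2 * hsdef - 2 * a0 * hw0def - 2 * a1 * hw1def - 2 * a2 * hw2def
  have key : (R 0 0 - (c + (1 - c) * a0 ^ 2)) ^ 2 + (R 0 1 - ((1 - c) * a0 * a1 - s * a2)) ^ 2 + (R 0 2 - ((1 - c) * a0 * a2 + s * a1)) ^ 2 + (R 1 0 - ((1 - c) * a0 * a1 + s * a2)) ^ 2 + (R 1 1 - (c + (1 - c) * a1 ^ 2)) ^ 2 + (R 1 2 - ((1 - c) * a1 * a2 - s * a0)) ^ 2 + (R 2 0 - ((1 - c) * a0 * a2 - s * a1)) ^ 2 + (R 2 1 - ((1 - c) * a1 * a2 + s * a0)) ^ 2 + (R 2 2 - (c + (1 - c) * a2 ^ 2)) ^ 2 = 0 := by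
    linear_combination o00 + o11 + o22 - 2 * c * hT - 2 * (1 - c) * hA - 2 * s * hW
      + (2 * c * (1 - c) + (1 - c) ^ 2 * (a0 ^ 2 + a1 ^ 2 + a2 ^ 2 + 1) + 2 * s ^ 2) * hunit
      - 2 * hcs
  have hz : ∀ x : ℝ, x ^ 2 ≤ 0 → x = 0 := fun x hx =>
    sq_eq_zero_iff.mp (le_antisymm hx (sq_nonneg x))
  have hS00 : R 0 0 = (c + (1 - c) * a0 ^ 2) := by
    have := hz (R 0 0 - (c + (1 - c) * a0 ^ 2)) (by linarith [key, sq_nonneg (R 0 1 - ((1 - c) * a0 * a1 - s * a2)), sq_nonneg (R 0 2 - ((1 - c) * a0 * a2 + s * a1)), sq_nonneg (R 1 0 - ((1 - c) * a0 * a1 + s * a2)), sq_nonneg (R 1 1 - (c + (1 - c) * a1 ^ 2)), sq_nonneg (R 1 2 - ((1 - c) * a1 * a2 - s * a0)), sq_nonneg (R 2 0 - ((1 - c) * a0 * a2 - s * a1)), sq_nonneg (R 2 1 - ((1 - c) * a1 * a2 + s * a0)), sq_nonneg (R 2 2 - (c + (1 - c) * a2 ^ 2))])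
    linarith [this]
  have hS01 : R 0 1 = ((1 - c) * a0 * a1 - s * a2) := by
    have := hz (R 0 1 - ((1 - c) * a0 * a1 - s * a2)) (by linarith [key, sq_nonneg (R 0 0 - (c + (1 - c) * a0 ^ 2)), sq_nonneg (R 0 2 - ((1 - c) * a0 * a2 + s * a1)), sq_nonneg (R 1 0 - ((1 - c) * a0 * a1 + s * a2)), sq_nonneg (R 1 1 - (c + (1 - c) * a1 ^ 2)), sq_nonneg (R 1 2 - ((1 - c) * a1 * a2 - s * a0)), sq_nonneg (R 2 0 - ((1 - c) * a0 * a2 - s * a1)), sq_nonneg (R 2 1 - ((1 - c) * a1 * a2 + s * a0)), sq_nonneg (R 2 2 - (c + (1 - c) * a2 ^ 2))])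
    linarith [this]
  have hS02 : R 0 2 = ((1 - c) * a0 * a2 + s * a1) := by
    have := hz (R 0 2 - ((1 - c) * a0 * a2 + s * a1)) (by linarith [key, sq_nonneg (R 0 0 - (c + (1 - c) * a0 ^ 2)), sq_nonneg (R 0 1 - ((1 - c) * a0 * a1 - s * a2)), sq_nonneg (R 1 0 - ((1 - c) * a0 * a1 + s * a2)), sq_nonneg (R 1 1 - (c + (1 - c) * a1 ^ 2)), sq_nonneg (R 1 2 - ((1 - c) * a1 * a2 - s * a0)), sq_nonneg (R 2 0 - ((1 - c) * a0 * a2 - s * a1)), sq_nonneg (R 2 1 - ((1 - c) * a1 * a2 + s * a0)), sq_nonneg (R 2 2 - (c + (1 - c) * a2 ^ 2))])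
    linarith [this]
  have hS10 : R 1 0 = ((1 - c) * a0 * a1 + s * a2) := by
    have := hz (R 1 0 - ((1 - c) * a0 * a1 + s * a2)) (by linarith [key, sq_nonneg (R 0 0 - (c + (1 - c) * a0 ^ 2)), sq_nonneg (R 0 1 - ((1 - c) * a0 * a1 - s * a2)), sq_nonneg (R 0 2 - ((1 - c) * a0 * a2 + s * a1)), sq_nonneg (R 1 1 - (c + (1 - c) * a1 ^ 2)), sq_nonneg (R 1 2 - ((1 - c) * a1 * a2 - s * a0)), sq_nonneg (R 2 0 - ((1 - c) * a0 * a2 - s * a1)), sq_nonneg (R 2 1 - ((1 - c) * a1 * a2 + s * a0)), sq_nonneg (R 2 2 - (c + (1 - c) * a2 ^ 2))])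
    linarith [this]
  have hS11 : R 1 1 = (c + (1 - c) * a1 ^ 2) := by
    have := hz (R 1 1 - (c + (1 - c) * a1 ^ 2)) (by linarith [key, sq_nonneg (R 0 0 - (c + (1 - c) * a0 ^ 2)), sq_nonneg (R 0 1 - ((1 - c) * a0 * a1 - s * a2)), sq_nonneg (R 0 2 - ((1 - c) * a0 * a2 + s * a1)), sq_nonneg (R 1 0 - ((1 - c) * a0 * a1 + s * a2)), sq_nonneg (R 1 2 - ((1 - c) * a1 * a2 - s * a0)), sq_nonneg (R 2 0 - ((1 - c) * a0 * a2 - s * a1)), sq_nonneg (R 2 1 - ((1 - c) * a1 * a2 + s * a0)), sq_nonneg (R 2 2 - (c + (1 - c) * a2 ^ 2))])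
    linarith [this]
  have hS12 : R 1 2 = ((1 - c) * a1 * a2 - s * a0) := by
    have := hz (R 1 2 - ((1 - c) * a1 * a2 - s * a0)) (by linarith [key, sq_nonneg (R 0 0 - (c + (1 - c) * a0 ^ 2)), sq_nonneg (R 0 1 - ((1 - c) * a0 * a1 - s * a2)), sq_nonneg (R 0 2 - ((1 - c) * a0 * a2 + s * a1)), sq_nonneg (R 1 0 - ((1 - c) * a0 * a1 + s * a2)), sq_nonneg (R 1 1 - (c + (1 - c) * a1 ^ 2)), sq_nonneg (R 2 0 - ((1 - c) * a0 * a2 - s * a1)), sq_nonneg (R 2 1 - ((1 - c) * a1 * a2 + s * a0)), sq_nonneg (R 2 2 - (c + (1 - c) * a2 ^ 2))])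
    linarith [this]
  have hS20 : R 2 0 = ((1 - c) * a0 * a2 - s * a1) := by
    have := hz (R 2 0 - ((1 - c) * a0 * a2 - s * a1)) (by linarith [key, sq_nonneg (R 0 0 - (c + (1 - c) * a0 ^ 2)), sq_nonneg (R 0 1 - ((1 - c) * a0 * a1 - s * a2)), sq_nonneg (R 0 2 - ((1 - c) * a0 * a2 + s * a1)), sq_nonneg (R 1 0 - ((1 - c) * a0 * a1 + s * a2)), sq_nonneg (R 1 1 - (c + (1 - c) * a1 ^ 2)), sq_nonneg (R 1 2 - ((1 - c) * a1 * a2 - s * a0)), sq_nonneg (R 2 1 - ((1 - c) * a1 * a2 + s * a0)), sq_nonneg (R 2 2 - (c + (1 - c) * a2 ^ 2))])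
    linarith [this]
  have hS21 : R 2 1 = ((1 - c) * a1 * a2 + s * a0) := by
    have := hz (R 2 1 - ((1 - c) * a1 * a2 + s * a0)) (by linarith [key, sq_nonneg (R 0 0 - (c + (1 - c) * a0 ^ 2)), sq_nonneg (R 0 1 - ((1 - c) * a0 * a1 - s * a2)), sq_nonneg (R 0 2 - ((1 - c) * a0 * a2 + s * a1)), sq_nonneg (R 1 0 - ((1 - c) * a0 * a1 + s * a2)), sq_nonneg (R 1 1 - (c + (1 - c) * a1 ^ 2)), sq_nonneg (R 1 2 - ((1 - c) * a1 * a2 - s * a0)), sq_nonneg (R 2 0 - ((1 - c) * a0 * a2 - s * a1)), sq_nonneg (R 2 2 - (c + (1 - c) * a2 ^ 2))])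
    linarith [this]
  have hS22 : R 2 2 = (c + (1 - c) * a2 ^ 2) := by
    have := hz (R 2 2 - (c + (1 - c) * a2 ^ 2)) (by linarith [key, sq_nonneg (R 0 0 - (c + (1 - c) * a0 ^ 2)), sq_nonneg (R 0 1 - ((1 - c) * a0 * a1 - s * a2)), sq_nonneg (R 0 2 - ((1 - c) * a0 * a2 + s * a1)), sq_nonneg (R 1 0 - ((1 - c) * a0 * a1 + s * a2)), sq_nonneg (R 1 1 - (c + (1 - c) * a1 ^ 2)), sq_nonneg (R 1 2 - ((1 - c) * a1 * a2 - s * a0)), sq_nonneg (R 2 0 - ((1 - c) * a0 * a2 - s * a1)), sq_nonneg (R 2 1 - ((1 - c) * a1 * a2 + s * a0))])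
    linarith [this]
  -- M symmetry
  have hm10 : M 1 0 = M 0 1 := by
    have := congrFun (congrFun hM.1 0) 1
    simpa using this
  have hm20 : M 2 0 = M 0 2 := by
    have := congrFun (congrFun hM.1 0) 2
    simpa using this
  have hm21 : M 2 1 = M 1 2 := by
    have := congrFun (congrFun hM.1 1) 2
    simpa using this
  -- Mbar applied to a, in scalars
  obtain ⟨tm, htm⟩ : ∃ x : ℝ, x = M 0 0 + M 1 1 + M 2 2 := ⟨_, rfl⟩
  obtain ⟨n0, hn0⟩ : ∃ x : ℝ, x = tm * a0 - (M 0 0 * a0 + M 0 1 * a1 + M 0 2 * a2) := ⟨_, rfl⟩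
  obtain ⟨n1, hn1⟩ : ∃ x : ℝ, x = tm * a1 - (M 0 1 * a0 + M 1 1 * a1 + M 1 2 * a2) := ⟨_, rfl⟩
  obtain ⟨n2, hn2⟩ : ∃ x : ℝ, x = tm * a2 - (M 0 2 * a0 + M 1 2 * a1 + M 2 2 * a2) := ⟨_, rfl⟩
  -- normI in scalars
  have hNI : normI M R = (1 - c) / 4 * (a0 * n0 + a1 * n1 + a2 * n2) := by
    simp only [normI, Matrix.trace, Matrix.diag, Matrix.mul_apply, Matrix.sub_apply,
      Matrix.one_apply, Fin.sum_univ_three]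
    norm_num [Fin.ext_iff]
    simp only [hS00, hS01, hS02, hS10, hS11, hS12, hS20, hS21, hS22, hm10, hm20, hm21]
    linear_combination (-(1 - c) / 4) * (a0 * hn0 + a1 * hn1 + a2 * hn2)
      + (-(1 - c) / 4) * (a0 ^ 2 + a1 ^ 2 + a2 ^ 2) * htm
      + (-(1 - c) / 4) * (M 0 0 + M 1 1 + M 2 2) * hunit
  -- the vex vector in scalars
  have hv0 : ((M * R) 2 1 - (M * R) 1 2) / 2
      = s / 2 * n0 - (1 - c) / 2 * (a1 * n2 - a2 * n1) := by
    simp only [Matrix.mul_apply, Fin.sum_univ_three]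
    simp only [hS00, hS01, hS02, hS10, hS11, hS12, hS20, hS21, hS22, hm10, hm20, hm21]
    linear_combination (-s / 2) * hn0 + ((1 - c) / 2) * (a1 * hn2 - a2 * hn1) - (s / 2) * a0 * htm
  have hv1 : ((M * R) 0 2 - (M * R) 2 0) / 2
      = s / 2 * n1 - (1 - c) / 2 * (a2 * n0 - a0 * n2) := by
    simp only [Matrix.mul_apply, Fin.sum_univ_three]
    simp only [hS00, hS01, hS02, hS10, hS11, hS12, hS20, hS21, hS22, hm10, hm20, hm21]
    linear_combination (-s / 2) * hn1 + ((1 - c) / 2) * (a2 * hn0 - a0 * hn2) - (s / 2) * a1 * htm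
  have hv2 : ((M * R) 1 0 - (M * R) 0 1) / 2
      = s / 2 * n2 - (1 - c) / 2 * (a0 * n1 - a1 * n0) := by
    simp only [Matrix.mul_apply, Fin.sum_univ_three]
    simp only [hS00, hS01, hS02, hS10, hS11, hS12, hS20, hS21, hS22, hm10, hm20, hm21]
    linear_combination (-s / 2) * hn2 + ((1 - c) / 2) * (a0 * hn1 - a1 * hn0) - (s / 2) * a2 * htm
  -- norm of vexPa
  have hnorm : ‖vexPa (M * R)‖ ^ 2 = (((M * R) 2 1 - (M * R) 1 2) / 2) ^ 2
      + (((M * R) 0 2 - (M * R) 2 0) / 2) ^ 2 + (((M * R) 1 0 - (M * R) 0 1) / 2) ^ 2 := by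
    rw [vexPa, EuclideanSpace.norm_eq]
    rw [Real.sq_sqrt (by positivity)]
    simp [Fin.sum_univ_three, sq_abs]
    try ring
  -- spectral inequality
  have hNpsd : Mbar.PosSemidef := by
    refine PosSemidef.of_dotProduct_mulVec_nonneg hHerm fun x => ?_
    rw [hMbar]
    simpa using mbar_quadform_nonneg M hM x
  have hlam_ub : ∀ i, hNpsd.1.eigenvalues i ≤ lam := fun i =>
    hlam ▸ le_ciSup (Set.Finite.bddAbove (Set.finite_range _)) i
  have hMba : Mbar.mulVec ![a0, a1, a2] = ![n0, n1, n2] := by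
    have h0 : Mbar.mulVec ![a0, a1, a2] 0 = n0 := by
      simp only [hMbar, Matrix.mulVec, dotProduct, Fin.sum_univ_three, Matrix.sub_apply,
        Matrix.smul_apply, Matrix.one_apply, Matrix.trace, Matrix.diag, Matrix.cons_val_zero,
        Matrix.cons_val_one, Matrix.head_cons, Matrix.cons_val_two, Matrix.tail_cons,
        smul_eq_mul, Fin.isValue]
      norm_num [Fin.ext_iff]
      linear_combination -hn0 - a0 * htm
    have h1 : Mbar.mulVec ![a0, a1, a2] 1 = n1 := by
      simp only [hMbar, Matrix.mulVec, dotProduct, Fin.sum_univ_three, Matrix.sub_apply,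
        Matrix.smul_apply, Matrix.one_apply, Matrix.trace, Matrix.diag, Matrix.cons_val_zero,
        Matrix.cons_val_one, Matrix.head_cons, Matrix.cons_val_two, Matrix.tail_cons,
        smul_eq_mul, Fin.isValue]
      norm_num [Fin.ext_iff]
      linear_combination -hn1 - a1 * htm - a0 * hm10
    have h2 : Mbar.mulVec ![a0, a1, a2] 2 = n2 := by
      simp only [hMbar, Matrix.mulVec, dotProduct, Fin.sum_univ_three, Matrix.sub_apply,
        Matrix.smul_apply, Matrix.one_apply, Matrix.trace, Matrix.diag, Matrix.cons_val_zero,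
        Matrix.cons_val_one, Matrix.head_cons, Matrix.cons_val_two, Matrix.tail_cons,
        smul_eq_mul, Fin.isValue]
      norm_num [Fin.ext_iff]
      linear_combination -hn2 - a2 * htm - a0 * hm20 - a1 * hm21
    funext i
    fin_cases i
    exacts [h0, h1, h2]
  have hspec := spectral_ineq hNpsd hlam_ub ![a0, a1, a2]
  rw [hMba] at hspec
  simp only [dotProduct, Fin.sum_univ_three, Matrix.cons_val_zero, Matrix.cons_val_one,
    Matrix.head_cons, Matrix.cons_val_two, Matrix.tail_cons] at hspec
  have hdan : 0 ≤ a0 * n0 + a1 * n1 + a2 * n2 := by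
    have := hNpsd.dotProduct_mulVec_nonneg ![a0, a1, a2]
    rw [hMba] at this
    simpa [dotProduct, Fin.sum_univ_three] using this
  have hlam0 : 0 ≤ lam := le_trans (hNpsd.eigenvalues_nonneg 0) (hlam_ub 0)
  have hc1 : c ≤ 1 := by
    have h2 : c ^ 2 ≤ 1 := by linarith [sq_nonneg s]
    have h3 : |c| ≤ 1 := abs_le_one_iff_mul_self_le_one.mpr (by rw [← sq]; linarith)
    exact le_of_abs_le h3
  rw [hnorm, hv0, hv1, hv2, hNI]
  have hL : (s / 2 * n0 - (1 - c) / 2 * (a1 * n2 - a2 * n1)) ^ 2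
      + (s / 2 * n1 - (1 - c) / 2 * (a2 * n0 - a0 * n2)) ^ 2
      + (s / 2 * n2 - (1 - c) / 2 * (a0 * n1 - a1 * n0)) ^ 2
      = (1 - c) / 2 * (n0 ^ 2 + n1 ^ 2 + n2 ^ 2)
        - (1 - c) ^ 2 / 4 * (a0 * n0 + a1 * n1 + a2 * n2) ^ 2 := by
    linear_combination ((n0 ^ 2 + n1 ^ 2 + n2 ^ 2) / 4) * hcs
      + ((1 - c) ^ 2 * (n0 ^ 2 + n1 ^ 2 + n2 ^ 2) / 4) * hunit
  rw [hL]
  have step1 : (1 - c) / 2 * (n0 ^ 2 + n1 ^ 2 + n2 ^ 2)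
      ≤ (1 - c) / 2 * (lam * (a0 * n0 + a1 * n1 + a2 * n2)) :=
    mul_le_mul_of_nonneg_left (by linarith [hspec]) (by linarith)
  have step2 : 0 ≤ (1 - c) ^ 2 / 4 * (a0 * n0 + a1 * n1 + a2 * n2) ^ 2 := by positivity
  linarith [step1, step2]
end

section
/- Let R ∈ SO(3) and let M ∈ ℝ^{3×3} be symmetric positive semidefinite. Define M̄ = Tr(M)·I₃ − M and let λ̲ denote the smallest eigenvalue of M̄. Then ‖vex(P_a(M R))‖² ≥ (λ̲/2) · ‖M R‖_I · (1 + Tr(R)). -/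
open Matrix

set_option maxHeartbeats 2000000 in
/-- for `R ∈ SO(3)` and `M` symmetric positive semidefinite, with
`M̄ = Tr(M)·I₃ − M` and `λ̲` its smallest eigenvalue,
`‖vex(𝒫ₐ(M R))‖² ≥ (λ̲/2) ‖M R‖_I (1 + Tr(R))`. -/
theorem vexPa_sq_ge (R M : Matrix (Fin 3) (Fin 3) ℝ)
    (hR : Rᵀ * R = 1) (hRdet : R.det = 1)
    (hM : M.PosSemidef)
    (Mbar : Matrix (Fin 3) (Fin 3) ℝ)
    (hMbar : Mbar = M.trace • (1 : Matrix (Fin 3) (Fin 3) ℝ) - M)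
    (hHerm : Mbar.IsHermitian)
    (lam : ℝ) (hlam : lam = ⨅ i, hHerm.eigenvalues i) :
    ‖vexPa (M * R)‖ ^ 2 ≥ lam / 2 * normI M R * (1 + R.trace) := by
  -- symmetry of M
  have hm10 : M 1 0 = M 0 1 := by
    have h := congrFun (congrFun hM.1 0) 1
    simpa using h
  have hm20 : M 2 0 = M 0 2 := by
    have h := congrFun (congrFun hM.1 0) 2
    simpa using h
  have hm21 : M 2 1 = M 1 2 := by
    have h := congrFun (congrFun hM.1 1) 2
    simpa using h
  -- entries of Mbar
  have hb00 : Mbar 0 0 = M 1 1 + M 2 2 := by rw [hMbar]; simp [Matrix.trace_fin_three]; try ring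
  have hb01 : Mbar 0 1 = -M 0 1 := by rw [hMbar]; simp [Matrix.trace_fin_three]
  have hb02 : Mbar 0 2 = -M 0 2 := by rw [hMbar]; simp [Matrix.trace_fin_three]
  have hb10 : Mbar 1 0 = -M 0 1 := by rw [hMbar]; simp [Matrix.trace_fin_three, hm10]
  have hb11 : Mbar 1 1 = M 0 0 + M 2 2 := by rw [hMbar]; simp [Matrix.trace_fin_three]; try ring
  have hb12 : Mbar 1 2 = -M 1 2 := by rw [hMbar]; simp [Matrix.trace_fin_three]
  have hb20 : Mbar 2 0 = -M 0 2 := by rw [hMbar]; simp [Matrix.trace_fin_three, hm20]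
  have hb21 : Mbar 2 1 = -M 1 2 := by rw [hMbar]; simp [Matrix.trace_fin_three, hm21]
  have hb22 : Mbar 2 2 = M 0 0 + M 1 1 := by rw [hMbar]; simp [Matrix.trace_fin_three]; try ring
  -- Positive semidefiniteness of Mbar
  have hMbarPSD : Mbar.PosSemidef := by
    refine Matrix.PosSemidef.of_dotProduct_mulVec_nonneg hHerm (fun x => ?_)
    obtain ⟨B, hB⟩ : ∃ B : Matrix (Fin 3) (Fin 3) ℝ, M = star B * B := by
      open scoped MatrixOrder in
      exact CStarAlgebra.nonneg_iff_eq_star_mul_self.mp hM.nonneg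
    rw [hMbar, hB]
    simp only [Matrix.mulVec, dotProduct, Matrix.mul_apply, Matrix.sub_apply, Matrix.star_eq_conjTranspose,
      Matrix.smul_apply, Matrix.one_apply, Matrix.trace, Matrix.diag, Fin.sum_univ_three,
      Matrix.conjTranspose_apply, star_trivial, Pi.star_apply, smul_eq_mul, Fin.ext_iff]
    norm_num
    nlinarith [sq_nonneg (B 0 0 * x 1 - B 0 1 * x 0), sq_nonneg (B 0 0 * x 2 - B 0 2 * x 0),
      sq_nonneg (B 0 1 * x 2 - B 0 2 * x 1), sq_nonneg (B 1 0 * x 1 - B 1 1 * x 0),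
      sq_nonneg (B 1 0 * x 2 - B 1 2 * x 0), sq_nonneg (B 1 1 * x 2 - B 1 2 * x 1),
      sq_nonneg (B 2 0 * x 1 - B 2 1 * x 0), sq_nonneg (B 2 0 * x 2 - B 2 2 * x 0),
      sq_nonneg (B 2 1 * x 2 - B 2 2 * x 1)]
  have hev0 : ∀ i, 0 ≤ hHerm.eigenvalues i := fun i => hMbarPSD.eigenvalues_nonneg i
  have hlamle : ∀ i, lam ≤ hHerm.eigenvalues i := fun i => by
    rw [hlam]; exact ciInf_le (Set.Finite.bddBelow (Set.finite_range _)) i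
  -- spectral step: Mbar * Mbar - lam • Mbar is PSD
  have hNpsd : (Mbar * Mbar - lam • Mbar).PosSemidef := by
    set U : Matrix (Fin 3) (Fin 3) ℝ := (hHerm.eigenvectorUnitary : Matrix (Fin 3) (Fin 3) ℝ)
      with hUdef
    have hU2 : star U * U = 1 := Matrix.mem_unitaryGroup_iff'.mp hHerm.eigenvectorUnitary.2
    have hspec : Mbar = U * Matrix.diagonal hHerm.eigenvalues * star U := by
      have h := hHerm.spectral_theorem
      rwa [RCLike.ofReal_real_eq_id, Function.id_comp] at h
    set D : Matrix (Fin 3) (Fin 3) ℝ := Matrix.diagonal hHerm.eigenvalues with hDdef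
    have hDD : D * D - lam • D = Matrix.diagonal (fun i => hHerm.eigenvalues i * hHerm.eigenvalues i
        - lam * hHerm.eigenvalues i) := by
      rw [hDdef, Matrix.diagonal_mul_diagonal]
      rw [show lam • Matrix.diagonal hHerm.eigenvalues
          = Matrix.diagonal (lam • hHerm.eigenvalues) from (Matrix.diagonal_smul lam _).symm]
      rw [Matrix.diagonal_sub]
      congr 1
    have hNdiag : Mbar * Mbar - lam • Mbar
        = U * Matrix.diagonal (fun i => hHerm.eigenvalues i * hHerm.eigenvalues i
            - lam * hHerm.eigenvalues i) * star U := by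
      calc Mbar * Mbar - lam • Mbar
          = (U * D * star U) * (U * D * star U) - lam • (U * D * star U) := by rw [← hspec]
        _ = U * D * ((star U * U) * (D * star U)) - lam • (U * D * star U) := by
            simp only [Matrix.mul_assoc]
        _ = U * (D * D) * star U - U * (lam • D) * star U := by
            rw [hU2, Matrix.one_mul, mul_smul_comm, smul_mul_assoc]
            simp only [Matrix.mul_assoc]
        _ = U * (D * D - lam • D) * star U := by rw [Matrix.mul_sub, Matrix.sub_mul]
        _ = _ := by rw [hDD]
    rw [hNdiag]
    have hdpsd : (Matrix.diagonal (fun i => hHerm.eigenvalues i * hHerm.eigenvalues i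
        - lam * hHerm.eigenvalues i)).PosSemidef :=
      Matrix.PosSemidef.diagonal (by
        intro i
        simp only [Pi.zero_apply]
        nlinarith [hev0 i, hlamle i])
    simpa [Matrix.star_eq_conjTranspose] using hdpsd.mul_mul_conjTranspose_same U
  -- apply to the vector s
  set s : Fin 3 → ℝ := ![(R 2 1 - R 1 2)/2, (R 0 2 - R 2 0)/2, (R 1 0 - R 0 1)/2] with hsdef
  have hconv : star s ⬝ᵥ ((Mbar * Mbar - lam • Mbar) *ᵥ s)
      = (((1/2) * R 0 1 * M 0 2 + (-1/2) * R 0 2 * M 0 1 + (-1/2) * R 1 0 * M 0 2 + (-1/2) * R 1 2 * M 1 1 + (-1/2) * R 1 2 * M 2 2 + (1/2) * R 2 0 * M 0 1 + (1/2) * R 2 1 * M 1 1 + (1/2) * R 2 1 * M 2 2)^2 + ((1/2) * R 0 1 * M 1 2 + (1/2) * R 0 2 * M 0 0 + (1/2) * R 0 2 * M 2 2 + (-1/2) * R 1 0 * M 1 2 + (1/2) * R 1 2 * M 0 1 + (-1/2) * R 2 0 * M 0 0 + (-1/2) * R 2 0 * M 2 2 + (-1/2) * R 2 1 * M 0 1)^2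 + ((-1/2) * R 0 1 * M 0 0 + (-1/2) * R 0 1 * M 1 1 + (-1/2) * R 0 2 * M 1 2 + (1/2) * R 1 0 * M 0 0 + (1/2) * R 1 0 * M 1 1 + (1/2) * R 1 2 * M 0 2 + (1/2) * R 2 0 * M 1 2 + (-1/2) * R 2 1 * M 0 2)^2) - lam * ((1/4) * R 0 1 * R 0 1 * M 0 0 + (1/4) * R 0 1 * R 0 1 * M 1 1 + (1/2) * R 0 1 * R 0 2 * M 1 2 + (-1/2) * R 0 1 * R 1 0 * M 0 0 + (-1/2) * R 0 1 * R 1 0 * M 1 1 + (-1/2) * R 0 1 * R 1 2 * M 0 2 + (-1/2) * R 0 1 * R 2 0 * M 1 2 + (1/2) * R 0 1 * R 2 1 * M 0 2 + (1/4) * R 0 2 * R 0 2 * M 0 0 + (1/4) * R 0 2 * R 0 2 * M 2 2 + (-1/2) * R 0 2 * R 1 0 * M 1 2 + (1/2) * R 0 2 * R 1 2 * M 0 1 + (-1/2) * R 0 2 * R 2 0 * M 0 0 + (-1/2) * R 0 2 * R 2 0 * M 2 2 + (-1/2) * R 0 2 * R 2 1 * M 0 1 + (1/4) * R 1 0 *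 R 1 0 * M 0 0 + (1/4) * R 1 0 * R 1 0 * M 1 1 + (1/2) * R 1 0 * R 1 2 * M 0 2 + (1/2) * R 1 0 * R 2 0 * M 1 2 + (-1/2) * R 1 0 * R 2 1 * M 0 2 + (1/4) * R 1 2 * R 1 2 * M 1 1 + (1/4) * R 1 2 * R 1 2 * M 2 2 + (-1/2) * R 1 2 * R 2 0 * M 0 1 + (-1/2) * R 1 2 * R 2 1 * M 1 1 + (-1/2) * R 1 2 * R 2 1 * M 2 2 + (1/4) * R 2 0 * R 2 0 * M 0 0 + (1/4) * R 2 0 * R 2 0 * M 2 2 + (1/2) * R 2 0 * R 2 1 * M 0 1 + (1/4) * R 2 1 * R 2 1 * M 1 1 + (1/4) * R 2 1 * R 2 1 * M 2 2) := by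
    simp [hsdef, Matrix.mulVec, dotProduct, Matrix.mul_apply, Matrix.sub_apply,
      Matrix.smul_apply, smul_eq_mul, Fin.sum_univ_three, hb00, hb01, hb02, hb10, hb11, hb12,
      hb20, hb21, hb22]
    ring
  have F3 : lam * ((1/4) * R 0 1 * R 0 1 * M 0 0 + (1/4) * R 0 1 * R 0 1 * M 1 1 + (1/2) * R 0 1 * R 0 2 * M 1 2 + (-1/2) * R 0 1 * R 1 0 * M 0 0 + (-1/2) * R 0 1 * R 1 0 * M 1 1 + (-1/2) * R 0 1 * R 1 2 * M 0 2 + (-1/2) * R 0 1 * R 2 0 * M 1 2 + (1/2) * R 0 1 * R 2 1 * M 0 2 + (1/4) * R 0 2 * R 0 2 * M 0 0 + (1/4) * R 0 2 * R 0 2 * M 2 2 + (-1/2) * R 0 2 * R 1 0 * M 1 2 + (1/2) * R 0 2 * R 1 2 * M 0 1 + (-1/2) * R 0 2 * R 2 0 * M 0 0 + (-1/2) * R 0 2 * R 2 0 * M 2 2 + (-1/2) * R 0 2 * R 2 1 * M 0 1 + (1/4) * R 1 0 * R 1 0 * M 0 0 + (1/4) * R 1 0 * R 1 0 * M 1 1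 + (1/2) * R 1 0 * R 1 2 * M 0 2 + (1/2) * R 1 0 * R 2 0 * M 1 2 + (-1/2) * R 1 0 * R 2 1 * M 0 2 + (1/4) * R 1 2 * R 1 2 * M 1 1 + (1/4) * R 1 2 * R 1 2 * M 2 2 + (-1/2) * R 1 2 * R 2 0 * M 0 1 + (-1/2) * R 1 2 * R 2 1 * M 1 1 + (-1/2) * R 1 2 * R 2 1 * M 2 2 + (1/4) * R 2 0 * R 2 0 * M 0 0 + (1/4) * R 2 0 * R 2 0 * M 2 2 + (1/2) * R 2 0 * R 2 1 * M 0 1 + (1/4) * R 2 1 * R 2 1 * M 1 1 + (1/4) * R 2 1 * R 2 1 * M 2 2)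
      ≤ (((1/2) * R 0 1 * M 0 2 + (-1/2) * R 0 2 * M 0 1 + (-1/2) * R 1 0 * M 0 2 + (-1/2) * R 1 2 * M 1 1 + (-1/2) * R 1 2 * M 2 2 + (1/2) * R 2 0 * M 0 1 + (1/2) * R 2 1 * M 1 1 + (1/2) * R 2 1 * M 2 2)^2 + ((1/2) * R 0 1 * M 1 2 + (1/2) * R 0 2 * M 0 0 + (1/2) * R 0 2 * M 2 2 + (-1/2) * R 1 0 * M 1 2 + (1/2) * R 1 2 * M 0 1 + (-1/2) * R 2 0 * M 0 0 + (-1/2) * R 2 0 * M 2 2 + (-1/2) * R 2 1 * M 0 1)^2 + ((-1/2) * R 0 1 * M 0 0 + (-1/2) * R 0 1 * M 1 1 + (-1/2) * R 0 2 * M 1 2 + (1/2) * R 1 0 * M 0 0 + (1/2) * R 1 0 * M 1 1 + (1/2) * R 1 2 * M 0 2 + (1/2) * R 2 0 * M 1 2 + (-1/2) * R 2 1 * M 0 2)^2) := by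
    have key := hNpsd.dotProduct_mulVec_nonneg s
    rw [hconv] at key
    linarith
  -- orthogonality and adjugate relations
  have hRRt : R * Rᵀ = 1 := by rwa [mul_eq_one_comm] at hR
  have hadj : R.adjugate = Rᵀ := by
    have h1 : R.adjugate * R = 1 := by rw [Matrix.adjugate_mul, hRdet, one_smul]
    calc R.adjugate = R.adjugate * (R * Rᵀ) := by rw [hRRt, Matrix.mul_one]
      _ = (R.adjugate * R) * Rᵀ := by rw [Matrix.mul_assoc]
      _ = Rᵀ := by rw [h1, Matrix.one_mul]
  rw [Matrix.adjugate_fin_three] at hadj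
  have o00 : R 0 0 * R 0 0 + R 1 0 * R 1 0 + R 2 0 * R 2 0 = 1 := by
    have h := congrFun (congrFun hR 0) 0
    simp [Matrix.mul_apply, Fin.sum_univ_three] at h
    linear_combination h
  have o01 : R 0 0 * R 0 1 + R 1 0 * R 1 1 + R 2 0 * R 2 1 = 0 := by
    have h := congrFun (congrFun hR 0) 1
    simp [Matrix.mul_apply, Fin.sum_univ_three] at h
    linear_combination h
  have o02 : R 0 0 * R 0 2 + R 1 0 * R 1 2 + R 2 0 * R 2 2 = 0 := by
    have h := congrFun (congrFun hR 0) 2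
    simp [Matrix.mul_apply, Fin.sum_univ_three] at h
    linear_combination h
  have o11 : R 0 1 * R 0 1 + R 1 1 * R 1 1 + R 2 1 * R 2 1 = 1 := by
    have h := congrFun (congrFun hR 1) 1
    simp [Matrix.mul_apply, Fin.sum_univ_three] at h
    linear_combination h
  have o12 : R 0 1 * R 0 2 + R 1 1 * R 1 2 + R 2 1 * R 2 2 = 0 := by
    have h := congrFun (congrFun hR 1) 2
    simp [Matrix.mul_apply, Fin.sum_univ_three] at h
    linear_combination h
  have o22 : R 0 2 * R 0 2 + R 1 2 * R 1 2 + R 2 2 * R 2 2 = 1 := by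
    have h := congrFun (congrFun hR 2) 2
    simp [Matrix.mul_apply, Fin.sum_univ_three] at h
    linear_combination h
  have p00 : R 0 0 * R 0 0 + R 0 1 * R 0 1 + R 0 2 * R 0 2 = 1 := by
    have h := congrFun (congrFun hRRt 0) 0
    simp [Matrix.mul_apply, Fin.sum_univ_three] at h
    linear_combination h
  have p01 : R 0 0 * R 1 0 + R 0 1 * R 1 1 + R 0 2 * R 1 2 = 0 := by
    have h := congrFun (congrFun hRRt 0) 1
    simp [Matrix.mul_apply, Fin.sum_univ_three] at h
    linear_combination h
  have p02 : R 0 0 * R 2 0 + R 0 1 * R 2 1 + R 0 2 * R 2 2 = 0 := by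
    have h := congrFun (congrFun hRRt 0) 2
    simp [Matrix.mul_apply, Fin.sum_univ_three] at h
    linear_combination h
  have p11 : R 1 0 * R 1 0 + R 1 1 * R 1 1 + R 1 2 * R 1 2 = 1 := by
    have h := congrFun (congrFun hRRt 1) 1
    simp [Matrix.mul_apply, Fin.sum_univ_three] at h
    linear_combination h
  have p12 : R 1 0 * R 2 0 + R 1 1 * R 2 1 + R 1 2 * R 2 2 = 0 := by
    have h := congrFun (congrFun hRRt 1) 2
    simp [Matrix.mul_apply, Fin.sum_univ_three] at h
    linear_combination h
  have p22 : R 2 0 * R 2 0 + R 2 1 * R 2 1 + R 2 2 * R 2 2 = 1 := by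
    have h := congrFun (congrFun hRRt 2) 2
    simp [Matrix.mul_apply, Fin.sum_univ_three] at h
    linear_combination h
  have q00 : R 1 1 * R 2 2 - R 1 2 * R 2 1 = R 0 0 := by
    have h := congrFun (congrFun hadj 0) 0
    simp at h
    linear_combination h
  have q01 : -(R 0 1 * R 2 2) + (R 0 2 * R 2 1) = R 1 0 := by
    have h := congrFun (congrFun hadj 0) 1
    simp at h
    linear_combination h
  have q02 : R 0 1 * R 1 2 - R 0 2 * R 1 1 = R 2 0 := by
    have h := congrFun (congrFun hadj 0) 2
    simp at h
    linear_combination h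
  have q10 : -(R 1 0 * R 2 2) + (R 1 2 * R 2 0) = R 0 1 := by
    have h := congrFun (congrFun hadj 1) 0
    simp at h
    linear_combination h
  have q11 : R 0 0 * R 2 2 - R 0 2 * R 2 0 = R 1 1 := by
    have h := congrFun (congrFun hadj 1) 1
    simp at h
    linear_combination h
  have q12 : -(R 0 0 * R 1 2) + (R 0 2 * R 1 0) = R 2 1 := by
    have h := congrFun (congrFun hadj 1) 2
    simp at h
    linear_combination h
  have q20 : R 1 0 * R 2 1 - R 1 1 * R 2 0 = R 0 2 := by
    have h := congrFun (congrFun hadj 2) 0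
    simp at h
    linear_combination h
  have q21 : -(R 0 0 * R 2 1) + (R 0 1 * R 2 0) = R 1 2 := by
    have h := congrFun (congrFun hadj 2) 1
    simp at h
    linear_combination h
  have q22 : R 0 0 * R 1 1 - R 0 1 * R 1 0 = R 2 2 := by
    have h := congrFun (congrFun hadj 2) 2
    simp at h
    linear_combination h
  -- Identity A
  have F1 : ((1) * M 0 0 + (1) * M 1 1 + (1) * M 2 2 + (-1) * R 0 0 * M 0 0 + (-1) * R 0 1 * M 0 1 + (-1) * R 0 2 * M 0 2 + (-1) * R 1 0 * M 0 1 + (-1) * R 1 1 * M 1 1 + (-1) * R 1 2 * M 1 2 + (-1) * R 2 0 * M 0 2 + (-1) * R 2 1 * M 1 2 + (-1) * R 2 2 * M 2 2) * (1 + (R 0 0 + R 1 1 + R 2 2)) = 2 * ((1/4) * R 0 1 * R 0 1 * M 0 0 + (1/4) * R 0 1 * R 0 1 * M 1 1 + (1/2) * R 0 1 * R 0 2 * M 1 2 + (-1/2) * R 0 1 * R 1 0 * M 0 0 + (-1/2) * R 0 1 * R 1 0 * M 1 1 + (-1/2) * R 0 1 * R 1 2 * M 0 2 + (-1/2) * R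 0 1 * R 2 0 * M 1 2 + (1/2) * R 0 1 * R 2 1 * M 0 2 + (1/4) * R 0 2 * R 0 2 * M 0 0 + (1/4) * R 0 2 * R 0 2 * M 2 2 + (-1/2) * R 0 2 * R 1 0 * M 1 2 + (1/2) * R 0 2 * R 1 2 * M 0 1 + (-1/2) * R 0 2 * R 2 0 * M 0 0 + (-1/2) * R 0 2 * R 2 0 * M 2 2 + (-1/2) * R 0 2 * R 2 1 * M 0 1 + (1/4) * R 1 0 * R 1 0 * M 0 0 + (1/4) * R 1 0 * R 1 0 * M 1 1 + (1/2) * R 1 0 * R 1 2 * M 0 2 + (1/2) * R 1 0 * R 2 0 * M 1 2 + (-1/2) * R 1 0 * R 2 1 * M 0 2 + (1/4) * R 1 2 * R 1 2 * M 1 1 + (1/4) * R 1 2 * R 1 2 * M 2 2 + (-1/2) * R 1 2 * R 2 0 * M 0 1 + (-1/2) * R 1 2 * R 2 1 * M 1 1 + (-1/2) * R 1 2 * R 2 1 * M 2 2 + (1/4) * R 2 0 * R 2 0 * M 0 0 + (1/4) * R 2 0 * R 2 0 * M 2 2 + (1/2) * R 2 0 * R 2 1 * M 0 1 + (1/4)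 * R 2 1 * R 2 1 * M 1 1 + (1/4) * R 2 1 * R 2 1 * M 2 2) := by
    linear_combination (-1/2) * M 0 0 * o00 + (-1/2) * M 2 2 * o00 + (-1) * M 0 1 * o01 + (-1) * M 0 2 * o02 + (-1/2) * M 1 1 * o11 + (-1/2) * M 2 2 * o11 + (-1) * M 1 2 * o12 + (-1) * M 2 2 * o22 + (-1/2) * M 0 0 * p00 + (1/2) * M 2 2 * p00 + (-1) * M 0 1 * p01 + (-1) * M 0 2 * p02 + (-1/2) * M 1 1 * p11 + (1/2) * M 2 2 * p11 + (-1) * M 1 2 * p12 + (-1) * M 1 1 * q00 + (-1) * M 2 2 * q00 + (1) * M 0 1 * q01 + (1) * M 0 2 * q02 + (1) * M 0 1 * q10 + (-1) * M 0 0 * q11 + (-1) * M 2 2 * q11 + (1) * M 1 2 * q12 + (1) * M 0 2 * q20 + (1) * M 1 2 * q21 + (-1) * M 0 0 * q22 + (-1) * M 1 1 * q22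
  -- Identity B
  have F2 : 4 * (((1/2) * R 0 1 * M 0 2 + (-1/2) * R 0 2 * M 0 1 + (1/2) * R 1 1 * M 1 2 + (-1/2) * R 1 2 * M 1 1 + (1/2) * R 2 1 * M 2 2 + (-1/2) * R 2 2 * M 1 2)^2 + ((-1/2) * R 0 0 * M 0 2 + (1/2) * R 0 2 * M 0 0 + (-1/2) * R 1 0 * M 1 2 + (1/2) * R 1 2 * M 0 1 + (-1/2) * R 2 0 * M 2 2 + (1/2) * R 2 2 * M 0 2)^2 + ((1/2) * R 0 0 * M 0 1 + (-1/2) * R 0 1 * M 0 0 + (1/2) * R 1 0 * M 1 1 + (-1/2) * R 1 1 * M 0 1 + (1/2) * R 2 0 * M 1 2 + (-1/2) * R 2 1 * M 0 2)^2)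
      = (((1/2) * R 0 1 * M 0 2 + (-1/2) * R 0 2 * M 0 1 + (-1/2) * R 1 0 * M 0 2 + (-1/2) * R 1 2 * M 1 1 + (-1/2) * R 1 2 * M 2 2 + (1/2) * R 2 0 * M 0 1 + (1/2) * R 2 1 * M 1 1 + (1/2) * R 2 1 * M 2 2)^2 + ((1/2) * R 0 1 * M 1 2 + (1/2) * R 0 2 * M 0 0 + (1/2) * R 0 2 * M 2 2 + (-1/2) * R 1 0 * M 1 2 + (1/2) * R 1 2 * M 0 1 + (-1/2) * R 2 0 * M 0 0 + (-1/2) * R 2 0 * M 2 2 + (-1/2) * R 2 1 * M 0 1)^2 + ((-1/2) * R 0 1 * M 0 0 + (-1/2) * R 0 1 * M 1 1 + (-1/2) * R 0 2 * M 1 2 + (1/2) * R 1 0 * M 0 0 + (1/2) * R 1 0 * M 1 1 + (1/2) * R 1 2 * M 0 2 + (1/2) * R 2 0 * M 1 2 + (-1/2) * R 2 1 * M 0 2)^2)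
        + (((1/2) * R 0 1 * M 0 2 + (-1/2) * R 0 2 * M 0 1 + (1/2) * R 1 0 * M 0 2 + (1) * R 1 1 * M 1 2 + (-1/2) * R 1 2 * M 1 1 + (1/2) * R 1 2 * M 2 2 + (-1/2) * R 2 0 * M 0 1 + (-1/2) * R 2 1 * M 1 1 + (1/2) * R 2 1 * M 2 2 + (-1) * R 2 2 * M 1 2)^2 + ((-1) * R 0 0 * M 0 2 + (-1/2) * R 0 1 * M 1 2 + (1/2) * R 0 2 * M 0 0 + (-1/2) * R 0 2 * M 2 2 + (-1/2) * R 1 0 * M 1 2 + (1/2) * R 1 2 * M 0 1 + (1/2) * R 2 0 * M 0 0 + (-1/2) * R 2 0 * M 2 2 + (1/2) * R 2 1 * M 0 1 + (1) * R 2 2 * M 0 2)^2 + ((1) * R 0 0 * M 0 1 + (-1/2) * R 0 1 * M 0 0 + (1/2) * R 0 1 * M 1 1 + (1/2) * R 0 2 * M 1 2 + (-1/2) * R 1 0 * M 0 0 + (1/2) * R 1 0 * M 1 1 + (-1) * R 1 1 * M 0 1 + (-1/2) * R 1 2 * M 0 2 + (1/2) * R 2 0 * M 1 2 + (-1/2)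 * R 2 1 * M 0 2)^2) := by
    linear_combination (-1/2) * M 0 0 * M 0 0 * o00 + (-1/2) * M 0 1 * M 0 1 * o00 + (1/2) * M 1 2 * M 1 2 * o00 + (1/2) * M 2 2 * M 2 2 * o00 + (-1) * M 0 0 * M 0 1 * o01 + (-1) * M 0 1 * M 1 1 * o01 + (-1) * M 0 2 * M 1 2 * o01 + (-1) * M 0 0 * M 0 2 * o02 + (-1) * M 0 1 * M 1 2 * o02 + (-1) * M 0 2 * M 2 2 * o02 + (-1/2) * M 0 1 * M 0 1 * o11 + (1/2) * M 0 2 * M 0 2 * o11 + (-1/2) * M 1 1 * M 1 1 * o11 + (1/2) * M 2 2 * M 2 2 * o11 + (-1) * M 0 1 * M 0 2 * o12 + (-1) * M 1 1 * M 1 2 * o12 + (-1) * M 1 2 * M 2 2 * o12 + (1/2) * M 0 0 * M 0 0 * p00 + (1/2) * M 0 1 * M 0 1 * p00 + (-1/2) * M 1 2 * M 1 2 * p00 + (-1/2) * M 2 2 * M 2 2 * p00 + (1) * M 0 0 * M 0 1 * p01 + (1) * M 0 1 * M 1 1 * p01 + (1) * M 0 2 * M 1 2 * p01 + (1) * M 0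 0 * M 0 2 * p02 + (1) * M 0 1 * M 1 2 * p02 + (1) * M 0 2 * M 2 2 * p02 + (1/2) * M 0 1 * M 0 1 * p11 + (-1/2) * M 0 2 * M 0 2 * p11 + (1/2) * M 1 1 * M 1 1 * p11 + (-1/2) * M 2 2 * M 2 2 * p11 + (1) * M 0 1 * M 0 2 * p12 + (1) * M 1 1 * M 1 2 * p12 + (1) * M 1 2 * M 2 2 * p12
  -- assemble
  have htr : (M * (1 - R)).trace = (1) * M 0 0 + (1) * M 1 1 + (1) * M 2 2 + (-1) * R 0 0 * M 0 0 + (-1) * R 0 1 * M 0 1 + (-1) * R 0 2 * M 0 2 + (-1) * R 1 0 * M 0 1 + (-1) * R 1 1 * M 1 1 + (-1) * R 1 2 * M 1 2 + (-1) * R 2 0 * M 0 2 + (-1) * R 2 1 * M 1 2 + (-1) * R 2 2 * M 2 2 := by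
    simp [Matrix.trace_fin_three, Matrix.mul_apply, Matrix.sub_apply, Matrix.one_apply,
      Fin.sum_univ_three, hm10, hm20, hm21]
    ring
  have hE : ‖vexPa (M * R)‖ ^ 2 = ((1/2) * R 0 1 * M 0 2 + (-1/2) * R 0 2 * M 0 1 + (1/2) * R 1 1 * M 1 2 + (-1/2) * R 1 2 * M 1 1 + (1/2) * R 2 1 * M 2 2 + (-1/2) * R 2 2 * M 1 2)^2 + ((-1/2) * R 0 0 * M 0 2 + (1/2) * R 0 2 * M 0 0 + (-1/2) * R 1 0 * M 1 2 + (1/2) * R 1 2 * M 0 1 + (-1/2) * R 2 0 * M 2 2 + (1/2) * R 2 2 * M 0 2)^2 + ((1/2) * R 0 0 * M 0 1 + (-1/2) * R 0 1 * M 0 0 + (1/2) * R 1 0 * M 1 1 + (-1/2) * R 1 1 * M 0 1 + (1/2) * R 2 0 * M 1 2 + (-1/2) * R 2 1 * M 0 2)^2 := by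
    rw [vexPa, EuclideanSpace.norm_eq, Real.sq_sqrt (by positivity)]
    simp [Fin.sum_univ_three, Real.norm_eq_abs, sq_abs, Matrix.mul_apply, hm10, hm20, hm21]
    ring
  have hRHS : lam / 2 * normI M R * (1 + R.trace) = lam * ((1/4) * R 0 1 * R 0 1 * M 0 0 + (1/4) * R 0 1 * R 0 1 * M 1 1 + (1/2) * R 0 1 * R 0 2 * M 1 2 + (-1/2) * R 0 1 * R 1 0 * M 0 0 + (-1/2) * R 0 1 * R 1 0 * M 1 1 + (-1/2) * R 0 1 * R 1 2 * M 0 2 + (-1/2) * R 0 1 * R 2 0 * M 1 2 + (1/2) * R 0 1 * R 2 1 * M 0 2 + (1/4) * R 0 2 * R 0 2 * M 0 0 + (1/4) * R 0 2 * R 0 2 * M 2 2 + (-1/2) * R 0 2 * R 1 0 * M 1 2 + (1/2) * R 0 2 * R 1 2 * M 0 1 + (-1/2) * R 0 2 * R 2 0 * M 0 0 + (-1/2) * R 0 2 * R 2 0 * M 2 2 + (-1/2) * R 0 2 * R 2 1 * M 0 1 + (1/4) * R 1 0 * R 1 0 * M 0 0 + (1/4) * R 1 0 * R 1 0 * M 1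 1 + (1/2) * R 1 0 * R 1 2 * M 0 2 + (1/2) * R 1 0 * R 2 0 * M 1 2 + (-1/2) * R 1 0 * R 2 1 * M 0 2 + (1/4) * R 1 2 * R 1 2 * M 1 1 + (1/4) * R 1 2 * R 1 2 * M 2 2 + (-1/2) * R 1 2 * R 2 0 * M 0 1 + (-1/2) * R 1 2 * R 2 1 * M 1 1 + (-1/2) * R 1 2 * R 2 1 * M 2 2 + (1/4) * R 2 0 * R 2 0 * M 0 0 + (1/4) * R 2 0 * R 2 0 * M 2 2 + (1/2) * R 2 0 * R 2 1 * M 0 1 + (1/4) * R 2 1 * R 2 1 * M 1 1 + (1/4) * R 2 1 * R 2 1 * M 2 2) / 4 := by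
    simp only [normI]
    rw [htr, Matrix.trace_fin_three]
    linear_combination (lam/8) * F1
  rw [ge_iff_le, hRHS, hE]
  linarith only [F2, F3, sq_nonneg ((1/2) * R 0 1 * M 0 2 + (-1/2) * R 0 2 * M 0 1 + (1/2) * R 1 0 * M 0 2 + (1) * R 1 1 * M 1 2 + (-1/2) * R 1 2 * M 1 1 + (1/2) * R 1 2 * M 2 2 + (-1/2) * R 2 0 * M 0 1 + (-1/2) * R 2 1 * M 1 1 + (1/2) * R 2 1 * M 2 2 + (-1) * R 2 2 * M 1 2), sq_nonneg ((-1) * R 0 0 * M 0 2 + (-1/2) * R 0 1 * M 1 2 + (1/2) * R 0 2 * M 0 0 + (-1/2) * R 0 2 * M 2 2 + (-1/2) * R 1 0 * M 1 2 + (1/2) * R 1 2 * M 0 1 + (1/2) * R 2 0 * M 0 0 + (-1/2) * R 2 0 * M 2 2 + (1/2) * R 2 1 * M 0 1 + (1) * R 2 2 * M 0 2), sq_nonneg ((1) * R 0 0 * M 0 1 + (-1/2) * R 0 1 * M 0 0 + (1/2) * R 0 1 * M 1 1 + (1/2) * R 0 2 * M 1 2 + (-1/2) * R 1 0 * M 0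 0 + (1/2) * R 1 0 * M 1 1 + (-1) * R 1 1 * M 0 1 + (-1/2) * R 1 2 * M 0 2 + (1/2) * R 2 0 * M 1 2 + (-1/2) * R 2 1 * M 0 2)]
end

section
/- Let P ∈ ℝ³, let h₁, …, h_N ∈ ℝ³ (N ≥ 2), and define d_{j,i} = ‖P − h_j‖ − ‖P − h_i‖. Let A ∈ ℝ^{N×4} be the matrix whose k-th row (for 1 ≤ k ≤ N−1) is [(h_k − h_{k+1})ᵀ, −d_{k+1,k}] and whose N-th row is [(h_N − h₁)ᵀ, −d_{1,N}], and let B ∈ ℝ^N be the vector whose first entry is ½(d_{2,1}² + ‖h₁‖² − ‖h₂‖²), whose k-th entry (for 2 ≤ k ≤ N−1) is ½(d_{k+1,k}² + ‖h_k‖² − ‖h_{k+1}‖² + 2 d_{k+1,k} Σ_{i=2}^{k} d_{i,i−1}), and whose N-th entry is ½(d_{1,N}² + ‖h_N‖² − ‖h₁‖² + 2 d_{1,N} Σ_{i=2}^{N} d_{i,i−1}). Then the augmented vector P̄ = [Pᵀ, ‖P − h₁‖]ᵀ ∈ ℝ⁴ satisfies A P̄ = B. -/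
open Matrix

/-- The Euclidean norm on ℝ³. -/
noncomputable def enorm3 (x : Fin 3 → ℝ) : ℝ :=
  Real.sqrt (∑ i, x i ^ 2)

/-- the TDOA data matrix `A` and vector `B` (rows indexed by
`k : Fin N`, corresponding to the paper's rows `1, …, N`, the `k`-th row pairing
anchor `k+1` with anchor `k+2`, and the last row pairing anchor `N` with anchor `1`)
satisfy `A P̄ = B` for the augmented position `P̄ = [Pᵀ, ‖P − h 1‖]ᵀ`. -/
theorem tdoa_matrix_identity (N : ℕ) (hN : 2 ≤ N)
    (P : Fin 3 → ℝ) (h : ℕ → Fin 3 → ℝ)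
    (d : ℕ → ℕ → ℝ) (hd : ∀ j i, d j i = enorm3 (P - h j) - enorm3 (P - h i))
    (A : Matrix (Fin N) (Fin 4) ℝ)
    (hA : ∀ (k : Fin N) (j : Fin 4),
      A k j =
        if hj : (j : ℕ) < 3 then
          h ((k : ℕ) + 1) ⟨j, hj⟩ -
            h (if (k : ℕ) + 1 = N then 1 else (k : ℕ) + 2) ⟨j, hj⟩
        else
          -d (if (k : ℕ) + 1 = N then 1 else (k : ℕ) + 2) ((k : ℕ) + 1))
    (B : Fin N → ℝ)
    (hB : ∀ k : Fin N,
      B k =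
        (d (if (k : ℕ) + 1 = N then 1 else (k : ℕ) + 2) ((k : ℕ) + 1) ^ 2 +
            enorm3 (h ((k : ℕ) + 1)) ^ 2 -
            enorm3 (h (if (k : ℕ) + 1 = N then 1 else (k : ℕ) + 2)) ^ 2 +
            2 * d (if (k : ℕ) + 1 = N then 1 else (k : ℕ) + 2) ((k : ℕ) + 1) *
              ∑ i ∈ Finset.Icc 2 ((k : ℕ) + 1), d i (i - 1)) / 2) :
    A.mulVec ![P 0, P 1, P 2, enorm3 (P - h 1)] = B := by
  funext k
  have hr : ∀ j : ℕ, enorm3 (P - h j) ^ 2 = ∑ i, (P i - h j i) ^ 2 := by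
    intro j
    rw [enorm3, Real.sq_sqrt (by positivity)]
    simp [Pi.sub_apply]
  have hn : ∀ j : ℕ, enorm3 (h j) ^ 2 = ∑ i, (h j i) ^ 2 := by
    intro j
    rw [enorm3, Real.sq_sqrt (by positivity)]
  have htel : ∀ n : ℕ, ∑ i ∈ Finset.Icc 2 (n + 1), d i (i - 1)
      = enorm3 (P - h (n + 1)) - enorm3 (P - h 1) := by
    intro n
    induction n with
    | zero => simp
    | succ n ih =>
      rw [Finset.sum_Icc_succ_top (by omega), ih]
      have : n + 1 + 1 - 1 = n + 1 := by omega
      rw [this, hd]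
      ring
  have A0 := hA k 0
  have A1 := hA k 1
  have A2 := hA k 2
  have A3 := hA k 3
  norm_num [Fin.mk_zero, Fin.mk_one, show (⟨2, by norm_num⟩ : Fin 3) = 2 from rfl] at A0 A1 A2 A3
  simp only [mulVec, dotProduct, Fin.sum_univ_four, A0, A1, A2, A3, hB k]
  norm_num [Matrix.cons_val_zero, Matrix.cons_val_one, Matrix.cons_val_two, Matrix.cons_val_three]
  set m := if (k : ℕ) + 1 = N then 1 else (k : ℕ) + 2 with hm
  rw [htel (k : ℕ), hd]
  have ha := hr ((k : ℕ) + 1)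
  have hb := hr m
  have hn1 := hn ((k : ℕ) + 1)
  have hn2 := hn m
  simp only [Fin.sum_univ_three, Pi.sub_apply] at ha hb hn1 hn2 ⊢
  linear_combination (ha - hb + hn2 - hn1) / 2
end
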